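/- L^∞ lower bound in B^{−1}_{∞,∞} for slowly varying profiles: let f be a nonzero function in the Schwartz class on R^2 and g in the Schwartz class on R, and set h_ε(x_h, x_3) = f(x_h) g(ε x_3) on R^3. Then for ε small enough, ||h_ε||_{Ḃ^{−1}_{∞,∞}(R^3)} ≥ (1/4) ||f||_{Ḃ^{−1}_{∞,∞}(R^2)} ||g||_{L^∞(R)}. In particular the family (h_ε) is bounded below, uniformly in ε, in Ḃ^{−1}_{∞,∞}(R^3). -/

import Mathlib

open MeasureTheory Real Complex
open scoped ENNReal

noncomputable section

/-- The heat semigroup `e^{tΔ}` on `ℝ²`, via convolution with the Gaussian kernel. -/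
def heat2 (t : ℝ) (f : ℝ × ℝ → ℂ) (x : ℝ × ℝ) : ℂ :=
  ∫ y : ℝ × ℝ, (((4 * π * t) ^ (-(1 : ℝ)) *
      Real.exp (-((x.1 - y.1) ^ 2 + (x.2 - y.2) ^ 2) / (4 * t)) : ℝ) : ℂ) * f y

/-- The heat semigroup `e^{tΔ}` on `ℝ³ = (ℝ×ℝ)×ℝ`, via convolution with the Gaussian
kernel. -/
def heat3 (t : ℝ) (u : (ℝ × ℝ) × ℝ → ℂ) (x : (ℝ × ℝ) × ℝ) : ℂ :=
  ∫ y : (ℝ × ℝ) × ℝ, (((4 * π * t) ^ (-(3 : ℝ) / 2) *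
      Real.exp (-((x.1.1 - y.1.1) ^ 2 + (x.1.2 - y.1.2) ^ 2 + (x.2 - y.2) ^ 2) / (4 * t)) : ℝ) : ℂ) *
    u y

/-- The `Ḃ^{-1}_{∞,∞}(ℝ²)` norm, computed via the heat flow:
`sup_{t>0} √t ‖e^{tΔ}f‖_{L^∞}`. -/
def bNorm2 (f : ℝ × ℝ → ℂ) : ℝ≥0∞ :=
  ⨆ (t : ℝ) (_ : 0 < t), ENNReal.ofReal (Real.sqrt t) * ⨆ x : ℝ × ℝ, (‖heat2 t f x‖₊ : ℝ≥0∞)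

/-- The `Ḃ^{-1}_{∞,∞}(ℝ³)` norm, computed via the heat flow:
`sup_{t>0} √t ‖e^{tΔ}u‖_{L^∞}`. -/
def bNorm3 (u : (ℝ × ℝ) × ℝ → ℂ) : ℝ≥0∞ :=
  ⨆ (t : ℝ) (_ : 0 < t), ENNReal.ofReal (Real.sqrt t) * ⨆ x : (ℝ × ℝ) × ℝ, (‖heat3 t u x‖₊ : ℝ≥0∞)

/-- The `L^∞(ℝ)` norm (with values in `ℝ≥0∞`). -/
def linfNorm (g : ℝ → ℂ) : ℝ≥0∞ := ⨆ y : ℝ, (‖g y‖₊ : ℝ≥0∞)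

/-! ### Auxiliary lemmas -/

/-- The heat semigroup `e^{tΔ}` on `ℝ`. -/
def heat1 (t : ℝ) (g : ℝ → ℂ) (x : ℝ) : ℂ :=
  ∫ y : ℝ, (((4 * π * t) ^ (-(1 : ℝ) / 2) *
      Real.exp (-(x - y) ^ 2 / (4 * t)) : ℝ) : ℂ) * g y

lemma gauss1 {t : ℝ} (ht : 0 < t) (c : ℝ) :
    ∫ y : ℝ, Real.exp (-(c - y) ^ 2 / (4 * t)) = Real.sqrt (4 * π * t) := by
  have h1 : ∀ y : ℝ, -(c - y) ^ 2 / (4 * t) = -(1 / (4 * t)) * (y - c) ^ 2 := by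
    intro y; field_simp; ring
  simp_rw [h1]
  rw [integral_sub_right_eq_self (fun z => Real.exp (-(1 / (4 * t)) * z ^ 2)) c]
  rw [integral_gaussian]
  congr 1
  field_simp

lemma gauss1_integrable {t : ℝ} (ht : 0 < t) (c : ℝ) :
    Integrable (fun y : ℝ => Real.exp (-(c - y) ^ 2 / (4 * t))) volume := by
  have h1 : ∀ y : ℝ, -(c - y) ^ 2 / (4 * t) = -(1 / (4 * t)) * (y - c) ^ 2 := by
    intro y; field_simp; ring
  simp_rw [h1]
  exact (integrable_exp_neg_mul_sq (by positivity)).comp_sub_right c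

lemma mass2 {t : ℝ} (ht : 0 < t) (x : ℝ × ℝ) :
    ∫ y : ℝ × ℝ, (4 * π * t) ^ (-(1 : ℝ)) *
      Real.exp (-((x.1 - y.1) ^ 2 + (x.2 - y.2) ^ 2) / (4 * t)) = 1 := by
  have hpos : 0 < 4 * π * t := by positivity
  have h1 : ∀ y : ℝ × ℝ, (4 * π * t) ^ (-(1 : ℝ)) *
      Real.exp (-((x.1 - y.1) ^ 2 + (x.2 - y.2) ^ 2) / (4 * t))
      = (4 * π * t) ^ (-(1 : ℝ)) *
        (Real.exp (-(x.1 - y.1) ^ 2 / (4 * t)) * Real.exp (-(x.2 - y.2) ^ 2 / (4 * t))) := by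
    intro y
    rw [← Real.exp_add]
    congr 2
    ring
  simp_rw [h1]
  rw [MeasureTheory.integral_const_mul, Measure.volume_eq_prod,
    MeasureTheory.integral_prod_mul (μ := volume) (ν := volume)
      (fun y1 : ℝ => Real.exp (-(x.1 - y1) ^ 2 / (4 * t)))
      (fun y2 : ℝ => Real.exp (-(x.2 - y2) ^ 2 / (4 * t))),
    gauss1 ht, gauss1 ht, Real.mul_self_sqrt hpos.le, Real.rpow_neg_one]
  exact inv_mul_cancel₀ hpos.ne'

lemma mass2_integrable {t : ℝ} (ht : 0 < t) (x : ℝ × ℝ) :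
    Integrable (fun y : ℝ × ℝ => (4 * π * t) ^ (-(1 : ℝ)) *
      Real.exp (-((x.1 - y.1) ^ 2 + (x.2 - y.2) ^ 2) / (4 * t))) volume := by
  have h1 : ∀ y : ℝ × ℝ, (4 * π * t) ^ (-(1 : ℝ)) *
      Real.exp (-((x.1 - y.1) ^ 2 + (x.2 - y.2) ^ 2) / (4 * t))
      = ((4 * π * t) ^ (-(1 : ℝ)) * Real.exp (-(x.1 - y.1) ^ 2 / (4 * t))) *
        Real.exp (-(x.2 - y.2) ^ 2 / (4 * t)) := by
    intro y
    rw [show -((x.1 - y.1) ^ 2 + (x.2 - y.2) ^ 2) / (4 * t)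
        = -(x.1 - y.1) ^ 2 / (4 * t) + -(x.2 - y.2) ^ 2 / (4 * t) by ring, Real.exp_add]
    ring
  simp_rw [h1]
  rw [Measure.volume_eq_prod]
  exact ((gauss1_integrable ht x.1).const_mul _).mul_prod (gauss1_integrable ht x.2)

lemma heat2_bound (f : SchwartzMap (ℝ × ℝ) ℂ) {t : ℝ} (ht : 0 < t) (x : ℝ × ℝ) :
    Real.sqrt t * ‖heat2 t (⇑f) x‖ ≤
      (SchwartzMap.seminorm ℝ 0 0) f + (∫ y : ℝ × ℝ, ‖f y‖) / (4 * π) := by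
  set C0 : ℝ := (SchwartzMap.seminorm ℝ 0 0) f with hC0def
  set C1 : ℝ := ∫ y : ℝ × ℝ, ‖f y‖ with hC1def
  have hC0 : ∀ z, ‖f z‖ ≤ C0 := fun z => SchwartzMap.norm_le_seminorm ℝ f z
  have hC0nn : 0 ≤ C0 := le_trans (norm_nonneg _) (hC0 0)
  have hC1nn : 0 ≤ C1 := integral_nonneg fun y => norm_nonneg _
  have hpos : (0:ℝ) < 4 * π * t := by positivity
  have hknn : ∀ y : ℝ × ℝ, (0:ℝ) ≤ (4 * π * t) ^ (-(1 : ℝ)) *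
      Real.exp (-((x.1 - y.1) ^ 2 + (x.2 - y.2) ^ 2) / (4 * t)) := fun y => by positivity
  have key1 : ‖heat2 t (⇑f) x‖ ≤ C0 := by
    have h := norm_integral_le_of_norm_le (μ := volume)
      (f := fun y : ℝ × ℝ => (((4 * π * t) ^ (-(1 : ℝ)) *
        Real.exp (-((x.1 - y.1) ^ 2 + (x.2 - y.2) ^ 2) / (4 * t)) : ℝ) : ℂ) * f y)
      (g := fun y : ℝ × ℝ => ((4 * π * t) ^ (-(1 : ℝ)) *
        Real.exp (-((x.1 - y.1) ^ 2 + (x.2 - y.2) ^ 2) / (4 * t))) * C0)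
      ((mass2_integrable ht x).mul_const _)
      (Filter.Eventually.of_forall fun y => by
        rw [norm_mul, Complex.norm_real, Real.norm_eq_abs, _root_.abs_of_nonneg (hknn y)]
        exact mul_le_mul_of_nonneg_left (hC0 y) (hknn y))
    calc ‖heat2 t (⇑f) x‖ ≤ _ := h
    _ = C0 := by rw [MeasureTheory.integral_mul_const, mass2 ht, one_mul]
  have key2 : ‖heat2 t (⇑f) x‖ ≤ (4 * π * t)⁻¹ * C1 := by
    have h := norm_integral_le_of_norm_le (μ := volume)
      (f := fun y : ℝ × ℝ => (((4 * π * t) ^ (-(1 : ℝ)) *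
        Real.exp (-((x.1 - y.1) ^ 2 + (x.2 - y.2) ^ 2) / (4 * t)) : ℝ) : ℂ) * f y)
      (g := fun y : ℝ × ℝ => (4 * π * t)⁻¹ * ‖f y‖)
      (f.integrable.norm.const_mul _)
      (Filter.Eventually.of_forall fun y => by
        rw [norm_mul, Complex.norm_real, Real.norm_eq_abs, _root_.abs_of_nonneg (hknn y)]
        apply mul_le_mul _ le_rfl (norm_nonneg _) (by positivity)
        rw [Real.rpow_neg_one]
        calc (4 * π * t)⁻¹ * Real.exp (-((x.1 - y.1) ^ 2 + (x.2 - y.2) ^ 2) / (4 * t))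
            ≤ (4 * π * t)⁻¹ * 1 := by
              apply mul_le_mul_of_nonneg_left _ (by positivity)
              rw [Real.exp_le_one_iff]
              apply div_nonpos_of_nonpos_of_nonneg _ (by positivity)
              nlinarith [sq_nonneg (x.1 - y.1), sq_nonneg (x.2 - y.2)]
        _ = (4 * π * t)⁻¹ := mul_one _)
    calc ‖heat2 t (⇑f) x‖ ≤ _ := h
    _ = (4 * π * t)⁻¹ * C1 := by rw [MeasureTheory.integral_const_mul]
  rcases le_or_gt t 1 with h | h
  · have h1 : Real.sqrt t ≤ 1 := by
      rw [show (1:ℝ) = Real.sqrt 1 by simp]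
      exact Real.sqrt_le_sqrt h
    calc Real.sqrt t * ‖heat2 t (⇑f) x‖ ≤ 1 * C0 :=
          mul_le_mul h1 key1 (norm_nonneg _) zero_le_one
    _ = C0 := one_mul _
    _ ≤ C0 + C1 / (4 * π) := le_add_of_nonneg_right (by positivity)
  · have hst : Real.sqrt t ≤ t := by
      calc Real.sqrt t ≤ Real.sqrt (t ^ 2) := Real.sqrt_le_sqrt (by nlinarith)
      _ = t := by rw [Real.sqrt_sq ht.le]
    have h2 : Real.sqrt t * ((4 * π * t)⁻¹ * C1) ≤ C1 / (4 * π) := by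
      rw [show (4 * π * t)⁻¹ = (4 * π)⁻¹ * t⁻¹ by rw [mul_inv]]
      have h3 : Real.sqrt t * t⁻¹ ≤ 1 := by
        calc Real.sqrt t * t⁻¹ ≤ t * t⁻¹ :=
              mul_le_mul_of_nonneg_right hst (by positivity)
        _ = 1 := mul_inv_cancel₀ ht.ne'
      calc Real.sqrt t * ((4 * π)⁻¹ * t⁻¹ * C1) = (Real.sqrt t * t⁻¹) * ((4 * π)⁻¹ * C1) := by
            ring
      _ ≤ 1 * ((4 * π)⁻¹ * C1) := mul_le_mul_of_nonneg_right h3 (by positivity)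
      _ = C1 / (4 * π) := by field_simp
    calc Real.sqrt t * ‖heat2 t (⇑f) x‖ ≤ Real.sqrt t * ((4 * π * t)⁻¹ * C1) :=
          mul_le_mul_of_nonneg_left key2 (Real.sqrt_nonneg t)
    _ ≤ C1 / (4 * π) := h2
    _ ≤ C0 + C1 / (4 * π) := le_add_of_nonneg_left hC0nn

lemma bNorm2_ne_top (f : SchwartzMap (ℝ × ℝ) ℂ) : bNorm2 (⇑f) ≠ ⊤ := by
  apply ne_top_of_le_ne_top (b := ENNReal.ofReal
    ((SchwartzMap.seminorm ℝ 0 0) f + (∫ y : ℝ × ℝ, ‖f y‖) / (4 * π)))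
    ENNReal.ofReal_ne_top
  apply iSup₂_le
  intro t ht
  rw [ENNReal.mul_iSup]
  apply iSup_le
  intro x
  rw [← enorm_eq_nnnorm, ← ofReal_norm, ← ENNReal.ofReal_mul (Real.sqrt_nonneg t)]
  exact ENNReal.ofReal_le_ofReal (heat2_bound f ht x)

lemma heat3_factor {t : ℝ} (ht : 0 < t) (f : ℝ × ℝ → ℂ) (g : ℝ → ℂ) (x : (ℝ × ℝ) × ℝ) :
    heat3 t (fun z => f z.1 * g z.2) x = heat2 t f x.1 * heat1 t g x.2 := by
  have hpos : (0:ℝ) < 4 * π * t := by positivity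
  have key : ∀ y : (ℝ × ℝ) × ℝ,
      (((4 * π * t) ^ (-(3 : ℝ) / 2) *
        Real.exp (-((x.1.1 - y.1.1) ^ 2 + (x.1.2 - y.1.2) ^ 2 + (x.2 - y.2) ^ 2) / (4 * t)) : ℝ) : ℂ) *
        (f y.1 * g y.2)
      = ((((4 * π * t) ^ (-(1 : ℝ)) *
          Real.exp (-((x.1.1 - y.1.1) ^ 2 + (x.1.2 - y.1.2) ^ 2) / (4 * t)) : ℝ) : ℂ) * f y.1) *
        ((((4 * π * t) ^ (-(1 : ℝ) / 2) *
          Real.exp (-(x.2 - y.2) ^ 2 / (4 * t)) : ℝ) : ℂ) * g y.2) := by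
    intro y
    have hr : (4 * π * t) ^ (-(3 : ℝ) / 2) *
        Real.exp (-((x.1.1 - y.1.1) ^ 2 + (x.1.2 - y.1.2) ^ 2 + (x.2 - y.2) ^ 2) / (4 * t))
        = ((4 * π * t) ^ (-(1 : ℝ)) *
            Real.exp (-((x.1.1 - y.1.1) ^ 2 + (x.1.2 - y.1.2) ^ 2) / (4 * t))) *
          ((4 * π * t) ^ (-(1 : ℝ) / 2) * Real.exp (-(x.2 - y.2) ^ 2 / (4 * t))) := by
      rw [show -((x.1.1 - y.1.1) ^ 2 + (x.1.2 - y.1.2) ^ 2 + (x.2 - y.2) ^ 2) / (4 * t)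
          = -((x.1.1 - y.1.1) ^ 2 + (x.1.2 - y.1.2) ^ 2) / (4 * t) + -(x.2 - y.2) ^ 2 / (4 * t)
          by ring, Real.exp_add,
        show (-(3:ℝ)/2) = (-(1:ℝ)) + (-(1:ℝ)/2) by norm_num, Real.rpow_add hpos]
      ring
    rw [show ((((4 * π * t) ^ (-(3 : ℝ) / 2) *
        Real.exp (-((x.1.1 - y.1.1) ^ 2 + (x.1.2 - y.1.2) ^ 2 + (x.2 - y.2) ^ 2) / (4 * t)) : ℝ)) : ℂ)
        = ((((4 * π * t) ^ (-(1 : ℝ)) *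
            Real.exp (-((x.1.1 - y.1.1) ^ 2 + (x.1.2 - y.1.2) ^ 2) / (4 * t)) : ℝ)) : ℂ) *
          ((((4 * π * t) ^ (-(1 : ℝ) / 2) * Real.exp (-(x.2 - y.2) ^ 2 / (4 * t)) : ℝ)) : ℂ) by
      rw [← Complex.ofReal_mul]; exact_mod_cast congrArg Complex.ofReal hr]
    ring
  unfold heat3 heat2 heat1
  simp_rw [key]
  rw [Measure.volume_eq_prod]
  exact MeasureTheory.integral_prod_mul (μ := volume) (ν := volume)
    (fun y1 : ℝ × ℝ => (((4 * π * t) ^ (-(1 : ℝ)) *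
      Real.exp (-((x.1.1 - y1.1) ^ 2 + (x.1.2 - y1.2) ^ 2) / (4 * t)) : ℝ) : ℂ) * f y1)
    (fun y2 : ℝ => (((4 * π * t) ^ (-(1 : ℝ) / 2) *
      Real.exp (-(x.2 - y2) ^ 2 / (4 * t)) : ℝ) : ℂ) * g y2)

lemma heat1_subst {t ε : ℝ} (ht : 0 < t) (hε : 0 < ε) (g : ℝ → ℂ) (y₀ : ℝ) :
    heat1 t (fun y => g (ε * y)) (y₀ / ε)
      = ∫ w : ℝ, (((4 * π) ^ (-(1 : ℝ) / 2) * Real.exp (-w ^ 2 / 4) : ℝ) : ℂ) *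
          g (y₀ + ε * Real.sqrt t * w) := by
  have hst : (0:ℝ) < Real.sqrt t := Real.sqrt_pos.2 ht
  set F : ℝ → ℂ := fun y => (((4 * π * t) ^ (-(1 : ℝ) / 2) *
      Real.exp (-(y₀ / ε - y) ^ 2 / (4 * t)) : ℝ) : ℂ) * g (ε * y) with hF
  have h1 : ∫ w : ℝ, F (Real.sqrt t * w + y₀ / ε) = (Real.sqrt t)⁻¹ • ∫ y, F y := by
    rw [Measure.integral_comp_mul_left (fun z => F (z + y₀ / ε)) (Real.sqrt t),
      integral_add_right_eq_self F (y₀ / ε), abs_of_pos (inv_pos.2 hst)]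
  have h2 : (∫ y, F y) = Real.sqrt t • ∫ w : ℝ, F (Real.sqrt t * w + y₀ / ε) := by
    rw [h1, smul_smul, mul_inv_cancel₀ hst.ne', one_smul]
  have h3 : ∀ w : ℝ, Real.sqrt t • F (Real.sqrt t * w + y₀ / ε)
      = (((4 * π) ^ (-(1 : ℝ) / 2) * Real.exp (-w ^ 2 / 4) : ℝ) : ℂ) *
          g (y₀ + ε * Real.sqrt t * w) := by
    intro w
    have e1 : y₀ / ε - (Real.sqrt t * w + y₀ / ε) = -(Real.sqrt t * w) := by ring
    have e2 : -(-(Real.sqrt t * w)) ^ 2 / (4 * t) = -w ^ 2 / 4 := by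
      have : (Real.sqrt t) ^ 2 = t := Real.sq_sqrt ht.le
      field_simp
      nlinarith [this]
    have e3 : ε * (Real.sqrt t * w + y₀ / ε) = y₀ + ε * Real.sqrt t * w := by
      field_simp; ring
    have e4 : Real.sqrt t * (4 * π * t) ^ (-(1 : ℝ) / 2) = (4 * π) ^ (-(1 : ℝ) / 2) := by
      rw [Real.mul_rpow (by positivity) ht.le,
        show t ^ (-(1:ℝ)/2) = (Real.sqrt t)⁻¹ by
          rw [show (-(1:ℝ)/2) = -(1/2 : ℝ) by norm_num, Real.rpow_neg ht.le,
            Real.sqrt_eq_rpow]]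
      field_simp
    rw [hF]
    simp only [e1, e2, e3]
    rw [real_smul]
    push_cast
    rw [← e4]
    push_cast
    ring
  rw [show heat1 t (fun y => g (ε * y)) (y₀ / ε) = ∫ y, F y from rfl, h2, ← integral_smul]
  exact integral_congr_ae (Filter.Eventually.of_forall h3)

lemma gaussNorm : ∫ w : ℝ, (4 * π) ^ (-(1 : ℝ) / 2) * Real.exp (-w ^ 2 / 4) = 1 := by
  have h1 : ∀ w : ℝ, -w ^ 2 / 4 = -(1/4 : ℝ) * w ^ 2 := fun w => by ring
  simp_rw [h1]
  rw [MeasureTheory.integral_const_mul, integral_gaussian,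
    show π / (1/4 : ℝ) = 4 * π by ring,
    show ((4:ℝ) * π) ^ (-(1:ℝ)/2) = (Real.sqrt (4 * π))⁻¹ by
      rw [show (-(1:ℝ)/2) = -(1/2 : ℝ) by norm_num, Real.rpow_neg (by positivity),
        Real.sqrt_eq_rpow]]
  exact inv_mul_cancel₀ (by positivity)

lemma tend_limit (g : ℝ → ℂ) (hg : Continuous g) {C : ℝ} (hC : ∀ y, ‖g y‖ ≤ C)
    (y₀ c : ℝ) :
    Filter.Tendsto (fun ε : ℝ => ∫ w : ℝ,
        (((4 * π) ^ (-(1 : ℝ) / 2) * Real.exp (-w ^ 2 / 4) : ℝ) : ℂ) * g (y₀ + ε * c * w))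
      (nhds 0) (nhds (g y₀)) := by
  have hcoef : ∀ w : ℝ, (0:ℝ) ≤ (4 * π) ^ (-(1 : ℝ) / 2) * Real.exp (-w ^ 2 / 4) := by
    intro w; positivity
  have key := MeasureTheory.tendsto_integral_filter_of_dominated_convergence
      (μ := volume) (l := nhds (0:ℝ))
      (F := fun ε : ℝ => fun w : ℝ =>
        (((4 * π) ^ (-(1 : ℝ) / 2) * Real.exp (-w ^ 2 / 4) : ℝ) : ℂ) * g (y₀ + ε * c * w))
      (f := fun w : ℝ =>
        (((4 * π) ^ (-(1 : ℝ) / 2) * Real.exp (-w ^ 2 / 4) : ℝ) : ℂ) * g y₀)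
      (bound := fun w : ℝ => (4 * π) ^ (-(1 : ℝ) / 2) * Real.exp (-w ^ 2 / 4) * C)
      (Filter.Eventually.of_forall (fun ε => by
        apply Continuous.aestronglyMeasurable
        exact (Complex.continuous_ofReal.comp (by continuity)).mul
          (hg.comp (by continuity))))
      (Filter.Eventually.of_forall (fun ε => Filter.Eventually.of_forall (fun w => by
        rw [norm_mul, Complex.norm_real, Real.norm_eq_abs, _root_.abs_of_nonneg (hcoef w)]
        exact mul_le_mul_of_nonneg_left (hC _) (hcoef w))))
      (by
        have : Integrable (fun w : ℝ => Real.exp (-(1/4 : ℝ) * w ^ 2)) volume :=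
          integrable_exp_neg_mul_sq (by norm_num)
        have h2 : (fun w : ℝ => (4 * π) ^ (-(1 : ℝ) / 2) * Real.exp (-w ^ 2 / 4) * C)
            = fun w : ℝ => (4 * π) ^ (-(1 : ℝ) / 2) * Real.exp (-(1/4 : ℝ) * w ^ 2) * C := by
          funext w; ring_nf
        rw [h2]
        exact (this.const_mul _).mul_const _)
      (Filter.Eventually.of_forall (fun w => by
        apply Filter.Tendsto.const_mul
        have h3 : Filter.Tendsto (fun ε : ℝ => y₀ + ε * c * w) (nhds 0) (nhds y₀) := by
          have : Continuous (fun ε : ℝ => y₀ + ε * c * w) := by continuity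
          have := this.tendsto 0
          simpa using this
        exact (hg.tendsto y₀).comp h3))
  have hval : (∫ w : ℝ,
      (((4 * π) ^ (-(1 : ℝ) / 2) * Real.exp (-w ^ 2 / 4) : ℝ) : ℂ) * g y₀) = g y₀ := by
    rw [MeasureTheory.integral_mul_const,
      show (∫ w : ℝ, (((4 * π) ^ (-(1 : ℝ) / 2) * Real.exp (-w ^ 2 / 4) : ℝ) : ℂ))
        = (((∫ w : ℝ, (4 * π) ^ (-(1 : ℝ) / 2) * Real.exp (-w ^ 2 / 4) : ℝ)) : ℂ)
        from integral_ofReal, gaussNorm]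
    simp
  rwa [hval] at key

/-- `L^∞` lower bound in `Ḃ^{-1}_{∞,∞}` for slowly varying profiles: for Schwartz `f ≠ 0`
on `ℝ²` and Schwartz `g` on `ℝ`, the function `h_ε(x_h,x₃) = f(x_h) g(ε x₃)` satisfies,
for `ε` small enough, `‖h_ε‖_{Ḃ^{-1}_{∞,∞}(ℝ³)} ≥ (1/4) ‖f‖_{Ḃ^{-1}_{∞,∞}(ℝ²)} ‖g‖_{L^∞}`. -/
theorem slowly_varying_lower_bound (f : SchwartzMap (ℝ × ℝ) ℂ) (hf : f ≠ 0)
    (g : SchwartzMap ℝ ℂ) :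
    ∃ ε₀ : ℝ, 0 < ε₀ ∧ ∀ ε : ℝ, 0 < ε → ε < ε₀ →
      ENNReal.ofReal (1 / 4) * bNorm2 (⇑f) * linfNorm (⇑g) ≤
        bNorm3 (fun x => f x.1 * g (ε * x.2)) := by
  by_cases hB : bNorm2 (⇑f) = 0
  · exact ⟨1, one_pos, fun ε _ _ => by simp [hB]⟩
  by_cases hL : linfNorm (⇑g) = 0
  · exact ⟨1, one_pos, fun ε _ _ => by simp [hL]⟩
  have hBtop : bNorm2 (⇑f) ≠ ⊤ := bNorm2_ne_top f
  have hgC : ∀ y, ‖g y‖ ≤ (SchwartzMap.seminorm ℝ 0 0) g :=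
    fun y => SchwartzMap.norm_le_seminorm ℝ g y
  have hLtop : linfNorm (⇑g) ≠ ⊤ := by
    apply ne_top_of_le_ne_top (b := ENNReal.ofReal ((SchwartzMap.seminorm ℝ 0 0) g))
      ENNReal.ofReal_ne_top
    apply iSup_le
    intro y
    rw [← enorm_eq_nnnorm, ← ofReal_norm]
    exact ENNReal.ofReal_le_ofReal (hgC y)
  set b : ℝ := (bNorm2 (⇑f)).toReal with hbdef
  set l : ℝ := (linfNorm (⇑g)).toReal with hldef
  have hbpos : 0 < b := ENNReal.toReal_pos hB hBtop
  have hlpos : 0 < l := ENNReal.toReal_pos hL hLtop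
  have hBeq : bNorm2 (⇑f) = ENNReal.ofReal b := (ENNReal.ofReal_toReal hBtop).symm
  have hLeq : linfNorm (⇑g) = ENNReal.ofReal l := (ENNReal.ofReal_toReal hLtop).symm
  -- choose t₀ and x₁
  have h1 : ENNReal.ofReal (b / 2) < bNorm2 (⇑f) := by
    rw [hBeq]
    exact (ENNReal.ofReal_lt_ofReal_iff hbpos).2 (by linarith)
  rw [bNorm2] at h1
  simp only [lt_iSup_iff] at h1
  obtain ⟨t₀, ht₀, h2⟩ := h1
  rw [ENNReal.mul_iSup, lt_iSup_iff] at h2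
  obtain ⟨x₁, h3⟩ := h2
  rw [← enorm_eq_nnnorm, ← ofReal_norm, ← ENNReal.ofReal_mul (Real.sqrt_nonneg _)] at h3
  have h4 : b / 2 < Real.sqrt t₀ * ‖heat2 t₀ (⇑f) x₁‖ := by
    by_contra hcon
    push_neg at hcon
    exact absurd (ENNReal.ofReal_le_ofReal hcon) h3.not_ge
  -- choose y₀
  have h5 : ENNReal.ofReal (l / 2) < linfNorm (⇑g) := by
    rw [hLeq]
    exact (ENNReal.ofReal_lt_ofReal_iff hlpos).2 (by linarith)
  rw [linfNorm, lt_iSup_iff] at h5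
  obtain ⟨y₀, h6⟩ := h5
  rw [← enorm_eq_nnnorm, ← ofReal_norm] at h6
  have h7 : l / 2 < ‖g y₀‖ := by
    by_contra hcon
    push_neg at hcon
    exact absurd (ENNReal.ofReal_le_ofReal hcon) h6.not_ge
  -- the limit
  set Φ : ℝ → ℂ := fun ε => ∫ w : ℝ,
      (((4 * π) ^ (-(1 : ℝ) / 2) * Real.exp (-w ^ 2 / 4) : ℝ) : ℂ) *
        g (y₀ + ε * Real.sqrt t₀ * w) with hΦdef
  have hlim : Filter.Tendsto (fun ε => ‖Φ ε‖) (nhds 0) (nhds ‖g y₀‖) :=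
    (tend_limit (⇑g) g.continuous hgC y₀ (Real.sqrt t₀)).norm
  have hev : ∀ᶠ ε in nhds (0:ℝ), l / 2 < ‖Φ ε‖ :=
    hlim.eventually_const_lt h7
  rw [Metric.eventually_nhds_iff] at hev
  obtain ⟨ε₀, hε₀pos, hball⟩ := hev
  refine ⟨ε₀, hε₀pos, fun ε hε hεlt => ?_⟩
  have hΦε : l / 2 < ‖Φ ε‖ := hball (by rw [Real.dist_eq, sub_zero, abs_of_pos hε]; exact hεlt)
  -- assemble
  have hfac : heat3 t₀ (fun x => f x.1 * g (ε * x.2)) (x₁, y₀ / ε)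
      = heat2 t₀ (⇑f) x₁ * Φ ε := by
    rw [heat3_factor ht₀ (⇑f) (fun y => g (ε * y)) (x₁, y₀ / ε)]
    congr 1
    exact heat1_subst ht₀ hε (⇑g) y₀
  have hreal : 1 / 4 * b * l ≤
      Real.sqrt t₀ * ‖heat3 t₀ (fun x => f x.1 * g (ε * x.2)) (x₁, y₀ / ε)‖ := by
    rw [hfac, norm_mul, ← mul_assoc]
    calc 1 / 4 * b * l = (b / 2) * (l / 2) := by ring
    _ ≤ (Real.sqrt t₀ * ‖heat2 t₀ (⇑f) x₁‖) * ‖Φ ε‖ :=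
        mul_le_mul h4.le hΦε.le (by linarith) (by positivity)
  calc ENNReal.ofReal (1 / 4) * bNorm2 (⇑f) * linfNorm (⇑g)
      = ENNReal.ofReal (1 / 4 * b * l) := by
        rw [hBeq, hLeq, ← ENNReal.ofReal_mul (by norm_num),
          ← ENNReal.ofReal_mul (by positivity)]
  _ ≤ ENNReal.ofReal (Real.sqrt t₀ *
        ‖heat3 t₀ (fun x => f x.1 * g (ε * x.2)) (x₁, y₀ / ε)‖) :=
      ENNReal.ofReal_le_ofReal hreal
  _ = ENNReal.ofReal (Real.sqrt t₀) *
        (‖heat3 t₀ (fun x => f x.1 * g (ε * x.2)) (x₁, y₀ / ε)‖₊ : ℝ≥0∞) := by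
      rw [ENNReal.ofReal_mul (Real.sqrt_nonneg _), ofReal_norm, enorm_eq_nnnorm]
  _ ≤ bNorm3 (fun x => f x.1 * g (ε * x.2)) := by
      apply le_iSup₂_of_le t₀ ht₀
      exact mul_le_mul_right (le_iSup (fun x : (ℝ × ℝ) × ℝ =>
        (‖heat3 t₀ (fun z => f z.1 * g (ε * z.2)) x‖₊ : ℝ≥0∞)) (x₁, y₀ / ε)) _

end
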